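/- If Θ_i, Θ_j, Θ_k ∈ [0, π) satisfy Θ_i + Θ_j + Θ_k > π, Θ_i + Θ_j < π + Θ_k, Θ_j + Θ_k < π + Θ_i, and Θ_k + Θ_i < π + Θ_j, then 1 - (cos²Θ_i + cos²Θ_j + cos²Θ_k) - 2 cos Θ_i cos Θ_j cos Θ_k > 0. -/
import Mathlib


open Real

theorem gram_det_pos_of_spherical_triangle
    (Θi Θj Θk : ℝ)
    (hi : Θi ∈ Set.Ico 0 π) (hj : Θj ∈ Set.Ico 0 π) (hk : Θk ∈ Set.Ico 0 π)
    (hsum : π < Θi + Θj + Θk)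
    (hij : Θi + Θj < π + Θk) (hjk : Θj + Θk < π + Θi) (hki : Θk + Θi < π + Θj) :
    0 < 1 - (Real.cos Θi ^ 2 + Real.cos Θj ^ 2 + Real.cos Θk ^ 2)
        - 2 * Real.cos Θi * Real.cos Θj * Real.cos Θk := by
  obtain ⟨hi0, hiπ⟩ := hi
  obtain ⟨hj0, hjπ⟩ := hj
  obtain ⟨hk0, hkπ⟩ := hk
  have key : 1 - (Real.cos Θi ^ 2 + Real.cos Θj ^ 2 + Real.cos Θk ^ 2)
        - 2 * Real.cos Θi * Real.cos Θj * Real.cos Θk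
      = -((Real.cos (Θj + Θk) + Real.cos Θi) * (Real.cos (Θj - Θk) + Real.cos Θi)) := by
    have hj2 : Real.sin Θj ^ 2 = 1 - Real.cos Θj ^ 2 := by
      have := Real.sin_sq_add_cos_sq Θj; linarith
    have hk2 : Real.sin Θk ^ 2 = 1 - Real.cos Θk ^ 2 := by
      have := Real.sin_sq_add_cos_sq Θk; linarith
    rw [Real.cos_add, Real.cos_sub]
    nlinarith [hj2, hk2]
  rw [key, Real.cos_add_cos (Θj + Θk) Θi, Real.cos_add_cos (Θj - Θk) Θi]
  have h1 : Real.cos ((Θj + Θk + Θi) / 2) < 0 :=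
    Real.cos_neg_of_pi_div_two_lt_of_lt (by linarith) (by linarith)
  have h2 : 0 < Real.cos ((Θj + Θk - Θi) / 2) :=
    Real.cos_pos_of_mem_Ioo ⟨by linarith, by linarith⟩
  have h3 : 0 < Real.cos ((Θj - Θk + Θi) / 2) :=
    Real.cos_pos_of_mem_Ioo ⟨by linarith, by linarith⟩
  have h4 : 0 < Real.cos ((Θj - Θk - Θi) / 2) := by
    rw [show (Θj - Θk - Θi) / 2 = -((Θk + Θi - Θj) / 2) by ring, Real.cos_neg]
    exact Real.cos_pos_of_mem_Ioo ⟨by linarith, by linarith⟩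
  nlinarith [mul_pos h2 (mul_pos h3 h4)]
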